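/- arXiv:1312.3072 — 2 statements merged into one kernel-verified Lean document; each statement's English description precedes it below -/
import Mathlib

section
/- If the Gallai graph Γ(G) of a graph G is a tree, then G is claw-free and chordal. -/
open SimpleGraph

/-- The Gallai graph of `G`: vertices are the edges of `G`; two distinct edges are
adjacent iff they share an endpoint but do not span a triangle in `G`. -/
def SimpleGraph.gallai {V : Type*} (G : SimpleGraph V) : SimpleGraph G.edgeSet where
  Adj e f := e ≠ f ∧ ∃ a b c : V, (e : Sym2 V) = s(a, b) ∧ (f : Sym2 V) = s(a, c) ∧ ¬ G.Adj b c
  symm := ⟨by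
    rintro e f ⟨hne, a, b, c, he, hf, h⟩
    exact ⟨hne.symm, a, c, b, hf, he, fun h' => h h'.symm⟩⟩
  loopless := ⟨fun e h => h.1 rfl⟩

/-- The line graph of `G`: vertices are the edges of `G`; two distinct edges are
adjacent iff they share an endpoint. -/
def SimpleGraph.lineGraph' {V : Type*} (G : SimpleGraph V) : SimpleGraph G.edgeSet where
  Adj e f := e ≠ f ∧ ∃ a : V, a ∈ (e : Sym2 V) ∧ a ∈ (f : Sym2 V)
  symm := ⟨by rintro e f ⟨hne, a, h1, h2⟩; exact ⟨hne.symm, a, h2, h1⟩⟩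
  loopless := ⟨fun e h => h.1 rfl⟩

/-- `G` contains an induced copy of `H`. -/
def HasInducedCopy {α V : Type*} (H : SimpleGraph α) (G : SimpleGraph V) : Prop :=
  ∃ f : α ↪ V, ∀ a b : α, H.Adj a b ↔ G.Adj (f a) (f b)

/-- A graph is chordal if it has no induced cycle of length at least 4. -/
def SimpleGraph.Chordal {V : Type*} (G : SimpleGraph V) : Prop :=
  ∀ n : ℕ, 4 ≤ n → ¬ HasInducedCopy (SimpleGraph.cycleGraph n) G

/-- The graph on `Fin n` with the given list of edges. -/
def graphOfList (n : ℕ) (l : List (Fin n × Fin n)) : SimpleGraph (Fin n) :=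
  SimpleGraph.fromRel (fun i j => (i, j) ∈ l)

/-- `F₁`, the claw `K_{1,3}`. -/
def F1 : SimpleGraph (Fin 4) := graphOfList 4 [(0,3),(1,3),(2,3)]

/-- `F₂`, the bowtie: two triangles sharing one vertex. -/
def F2 : SimpleGraph (Fin 5) := graphOfList 5 [(0,1),(0,4),(1,4),(2,3),(2,4),(3,4)]

/-- `F₃`, the octahedron `K_{2,2,2}`. -/
def F3 : SimpleGraph (Fin 6) := SimpleGraph.fromRel (fun i j => (i.val + 3) % 6 ≠ j.val)

/-- `F₄`: a path `0-1-2-3`, a vertex `4` adjacent to `1,2`, and a pendant `5` adjacent to `4`. -/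
def F4 : SimpleGraph (Fin 6) := graphOfList 6 [(0,1),(1,2),(2,3),(1,4),(2,4),(4,5)]

/-- `F₅`: the gem on `{0,1,2,3,4}` (path `0-3-4-2` dominated by `1`) plus vertex `5`
adjacent to the two top vertices `3,4`. -/
def F5 : SimpleGraph (Fin 6) :=
  graphOfList 6 [(0,1),(1,2),(2,4),(4,5),(5,3),(3,0),(1,3),(3,4),(4,1)]

/-- `F₆`: a path `0-1-2-3-4` plus a vertex `5` adjacent to the internal vertices `1,2,3`. -/
def F6 : SimpleGraph (Fin 6) := graphOfList 6 [(0,1),(1,2),(2,3),(3,4),(1,5),(2,5),(3,5)]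

/-- `F₇`: a path `0-1-2-3-4-5` plus a vertex `6` adjacent to the internal vertices `1,2,3,4`. -/
def F7 : SimpleGraph (Fin 7) :=
  graphOfList 7 [(0,1),(1,2),(2,3),(3,4),(4,5),(1,6),(2,6),(3,6),(4,6)]

/-- `F₈`: a path `0-1-2-3`, vertices `4` adjacent to `0,1`, `5` adjacent to `1,2`,
`6` adjacent to `2,3`, and the path `4-5-6`. -/
def F8 : SimpleGraph (Fin 7) :=
  graphOfList 7 [(0,1),(1,2),(2,3),(3,6),(6,5),(5,4),(4,0),(4,1),(1,5),(5,2),(2,6)]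

/-- `F₉`: vertices `x₁,x₂,x₃ = 0,1,2`, `y₁,y₂,y₃ = 3,4,5`, `z = 6`. -/
def F9 : SimpleGraph (Fin 7) :=
  graphOfList 7 [(0,1),(1,2),(3,4),(4,5),(0,3),(1,3),(1,4),(2,4),(2,5),(1,6),(2,6),(3,6),(4,6)]

/-- `F₈⁻`: the 6-cycle `a b e f c d = 0 1 2 3 4 5` with chords `db, bc, ce`. -/
def F8minus : SimpleGraph (Fin 6) :=
  graphOfList 6 [(0,1),(1,2),(2,3),(3,4),(4,5),(5,0),(5,1),(1,4),(4,2)]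

/-- The gem: the path `0-1-2-3` plus a dominating vertex `4`. -/
def gemGraph : SimpleGraph (Fin 5) :=
  graphOfList 5 [(0,1),(1,2),(2,3),(0,4),(1,4),(2,4),(3,4)]

/-- The diamond `K₄` minus one edge. -/
def diamondGraph : SimpleGraph (Fin 4) := graphOfList 4 [(0,1),(0,2),(0,3),(1,2),(1,3)]

/-- A set `U` is homogeneous in `G` if every vertex outside `U` is adjacent to all of
`U` or to none of `U`. -/
def SimpleGraph.Homogeneous {V : Type*} (G : SimpleGraph V) (U : Set V) : Prop :=
  ∀ v ∉ U, (∀ u ∈ U, G.Adj v u) ∨ (∀ u ∈ U, ¬ G.Adj v u)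

/-- A set of vertices is independent if no two of its vertices are adjacent. -/
def SimpleGraph.IndepSet {V : Type*} (G : SimpleGraph V) (U : Set V) : Prop :=
  ∀ u ∈ U, ∀ w ∈ U, ¬ G.Adj u w

/-- `v` is a cut-vertex of `G`: its removal separates two vertices that were reachable. -/
def SimpleGraph.IsCutVertex {V : Type*} (G : SimpleGraph V) (v : V) : Prop :=
  ∃ (x y : V) (hx : x ≠ v) (hy : y ≠ v), G.Reachable x y ∧
    ¬ (G.induce {u : V | u ≠ v}).Reachable ⟨x, hx⟩ ⟨y, hy⟩

/-- A block of `G`: a maximal set of vertices inducing a connected subgraph without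
a cut-vertex. -/
def SimpleGraph.IsBlock {V : Type*} (G : SimpleGraph V) (B : Set V) : Prop :=
  (G.induce B).Connected ∧ (∀ v, ¬ (G.induce B).IsCutVertex v) ∧
    ∀ C : Set V, B ⊆ C → (G.induce C).Connected → (∀ v, ¬ (G.induce C).IsCutVertex v) → B = C
def chainWalk {W : Type*} (H : SimpleGraph W) (g : ℕ → W)
    (hadj : ∀ i, H.Adj (g i) (g (i+1))) : (m : ℕ) → H.Walk (g 0) (g m)
  | 0 => .nil
  | m+1 => (chainWalk H g hadj m).concat (hadj m)

lemma chainWalk_support {W : Type*} (H : SimpleGraph W) (g : ℕ → W)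
    (hadj : ∀ i, H.Adj (g i) (g (i+1))) (m : ℕ) :
    (chainWalk H g hadj m).support = (List.range (m+1)).map g := by
  induction m with
  | zero => simp [chainWalk, List.range_succ]
  | succ m ih => simp [chainWalk, ih, List.range_succ]

lemma chainWalk_edges {W : Type*} (H : SimpleGraph W) (g : ℕ → W)
    (hadj : ∀ i, H.Adj (g i) (g (i+1))) (m : ℕ) :
    (chainWalk H g hadj m).edges = (List.range m).map (fun i => s(g i, g (i+1))) := by
  induction m with
  | zero => simp [chainWalk]
  | succ m ih => simp [chainWalk, ih, List.range_succ]

lemma not_isAcyclic_of_chain {W : Type*} (H : SimpleGraph W) (n : ℕ) (hn : 3 ≤ n)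
    (g : ℕ → W) (hper : ∀ i, g (i + n) = g i)
    (hinj : ∀ i < n, ∀ j < n, g i = g j → i = j)
    (hadj : ∀ i, H.Adj (g i) (g (i+1))) : ¬ H.IsAcyclic := by
  intro hac
  have hgn : g n = g 0 := by simpa using hper 0
  -- key injectivity including the wrap-around point
  have hinj' : ∀ i ≤ n, ∀ j ≤ n, 0 < i → 0 < j → g i = g j → i = j := by
    intro i hi j hj hi0 hj0 h
    rcases eq_or_lt_of_le hi with rfl | hi
    · rcases eq_or_lt_of_le hj with rfl | hj
      · rfl
      · rw [hgn] at h; have := hinj 0 (by omega) j hj h; omega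
    · rcases eq_or_lt_of_le hj with rfl | hj
      · rw [hgn] at h; have := hinj i hi 0 (by omega) h; omega
      · exact hinj i hi j hj h
  have hedge : ∀ i < n, ∀ j < n, s(g i, g (i+1)) = s(g j, g (j+1)) → i = j := by
    intro i hi j hj h
    rw [Sym2.eq_iff] at h
    rcases h with ⟨h1, _⟩ | ⟨h1, h2⟩
    · exact hinj i hi j hj h1
    · -- g i = g (j+1), g (i+1) = g j
      rcases Nat.eq_zero_or_pos i with rfl | hi0
      · -- g 0 = g (j+1); rewrite as g n = g (j+1)
        rw [← hgn] at h1
        have hj1 : j + 1 = n := (hinj' n le_rfl (j+1) (by omega) (by omega) (by omega) h1).symm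
        have := hinj' (0+1) (by omega) j (by omega) (by omega) (by omega) h2
        omega
      · have hij : i = j + 1 := hinj' i (by omega) (j+1) (by omega) hi0 (by omega) h1
        rcases Nat.eq_zero_or_pos j with rfl | hj0
        · rw [← hgn] at h2
          have := hinj' (i+1) (by omega) n le_rfl (by omega) (by omega) h2
          omega
        · have := hinj' (i+1) (by omega) j (by omega) (by omega) hj0 h2
          omega
  let c : H.Walk (g 0) (g 0) := (chainWalk H g hadj n).copy rfl hgn
  apply hac c
  have hce : c.edges = (List.range n).map (fun i => s(g i, g (i+1))) := by
    simp [c, chainWalk_edges]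
  have hcs : c.support = (List.range (n+1)).map g := by
    simp [c, chainWalk_support]
  refine ⟨⟨⟨?_⟩, ?_⟩, ?_⟩
  · rw [hce]
    exact List.Nodup.map_on (fun i hi j hj h => hedge i (by simpa using hi) j (by simpa using hj) h)
      (List.nodup_range (n := n))
  · intro h
    have : c.edges = [] := by rw [h]; rfl
    rw [hce] at this
    have := congrArg List.length this
    rw [List.length_map, List.length_range] at this
    simp at this
    omega
  · rw [hcs]
    have : ((List.range (n+1)).map g).tail = ((List.range n).map (fun i => g (i+1))) := by
      rw [List.range_succ_eq_map]
      simp [Function.comp]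
    rw [this]
    exact List.Nodup.map_on (fun i hi j hj h => by
      have hi' : i < n := by simpa using hi
      have hj' : j < n := by simpa using hj
      have := hinj' (i+1) (by omega) (j+1) (by omega) (by omega) (by omega) h
      omega) (List.nodup_range (n := n))

open Fin.NatCast Fin.CommRing

/-- If `Γ(G)` is a tree, then `G` is claw-free and chordal. -/
theorem stmt_11 {V : Type*} (G : SimpleGraph V) (htree : G.gallai.IsTree) :
    ¬ HasInducedCopy F1 G ∧ G.Chordal := by
  have hac := htree.IsAcyclic
  constructor
  · rintro ⟨f, hf⟩
    have fadj : ∀ i j : Fin 4, F1.Adj i j → G.Adj (f i) (f j) := fun i j h => (hf i j).mp h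
    have h03 : G.Adj (f 3) (f 0) := (fadj 0 3 (by rw [F1, graphOfList, fromRel_adj]; decide)).symm
    have h13 : G.Adj (f 3) (f 1) := (fadj 1 3 (by rw [F1, graphOfList, fromRel_adj]; decide)).symm
    have h23 : G.Adj (f 3) (f 2) := (fadj 2 3 (by rw [F1, graphOfList, fromRel_adj]; decide)).symm
    have n01 : ¬ G.Adj (f 0) (f 1) := fun h =>
      (by rw [F1, graphOfList, fromRel_adj]; decide : ¬ F1.Adj 0 1) ((hf 0 1).mpr h)
    have n12 : ¬ G.Adj (f 1) (f 2) := fun h =>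
      (by rw [F1, graphOfList, fromRel_adj]; decide : ¬ F1.Adj 1 2) ((hf 1 2).mpr h)
    have n20 : ¬ G.Adj (f 2) (f 0) := fun h =>
      (by rw [F1, graphOfList, fromRel_adj]; decide : ¬ F1.Adj 2 0) ((hf 2 0).mpr h)
    have fne : ∀ i j : Fin 4, i ≠ j → f i ≠ f j := fun i j h e => h (f.injective e)
    let e1 : G.edgeSet := ⟨s(f 3, f 0), G.mem_edgeSet.mpr h03⟩
    let e2 : G.edgeSet := ⟨s(f 3, f 1), G.mem_edgeSet.mpr h13⟩
    let e3 : G.edgeSet := ⟨s(f 3, f 2), G.mem_edgeSet.mpr h23⟩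
    have ne12 : e1 ≠ e2 := by
      intro h
      rw [Subtype.ext_iff] at h
      rw [Sym2.eq_iff] at h
      rcases h with ⟨_, h⟩ | ⟨h, _⟩
      · exact fne 0 1 (by decide) h
      · exact fne 3 1 (by decide) h
    have ne23 : e2 ≠ e3 := by
      intro h
      rw [Subtype.ext_iff] at h
      rw [Sym2.eq_iff] at h
      rcases h with ⟨_, h⟩ | ⟨h, _⟩
      · exact fne 1 2 (by decide) h
      · exact fne 3 2 (by decide) h
    have ne31 : e3 ≠ e1 := by
      intro h
      rw [Subtype.ext_iff] at h
      rw [Sym2.eq_iff] at h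
      rcases h with ⟨_, h⟩ | ⟨h, _⟩
      · exact fne 2 0 (by decide) h
      · exact fne 3 0 (by decide) h
    have a12 : G.gallai.Adj e1 e2 := by unfold SimpleGraph.gallai; exact ⟨ne12, f 3, f 0, f 1, rfl, rfl, n01⟩
    have a23 : G.gallai.Adj e2 e3 := by unfold SimpleGraph.gallai; exact ⟨ne23, f 3, f 1, f 2, rfl, rfl, n12⟩
    have a31 : G.gallai.Adj e3 e1 := by unfold SimpleGraph.gallai; exact ⟨ne31, f 3, f 2, f 0, rfl, rfl, n20⟩
    let g : ℕ → G.edgeSet := fun i => if i % 3 = 0 then e1 else if i % 3 = 1 then e2 else e3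
    have hper : ∀ i, g (i + 3) = g i := by
      intro i
      simp only [g, Nat.add_mod_right]
    have hinj : ∀ i < 3, ∀ j < 3, g i = g j → i = j := by
      intro i hi j hj h
      interval_cases i <;> interval_cases j <;> simp_all only [g] <;> norm_num at h ⊢ <;>
        first
        | rfl
        | exact absurd h ne12 | exact absurd h.symm ne12
        | exact absurd h ne23 | exact absurd h.symm ne23
        | exact absurd h.symm ne31 | exact absurd h ne31
    have hadj : ∀ i, G.gallai.Adj (g i) (g (i + 1)) := by
      intro i
      have hmod : (i % 3 = 0 ∧ (i+1) % 3 = 1) ∨ (i % 3 = 1 ∧ (i+1) % 3 = 2) ∨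
          (i % 3 = 2 ∧ (i+1) % 3 = 0) := by omega
      rcases hmod with ⟨h1, h2⟩ | ⟨h1, h2⟩ | ⟨h1, h2⟩ <;> simp only [g, h1, h2] <;> norm_num
      · exact a12
      · exact a23
      · exact a31
    exact not_isAcyclic_of_chain G.gallai 3 le_rfl g hper hinj hadj hac
  · rintro n hn ⟨f, hf⟩
    haveI : NeZero n := ⟨by omega⟩
    have hval : ∀ k : ℕ, k < n → ((k : Fin n) : ℕ) = k := fun k h => by
      simp [Fin.val_natCast, Nat.mod_eq_of_lt h]
    have h1v : ((1 : Fin n) : ℕ) = 1 := by rw [← Nat.cast_one]; exact hval 1 (by omega)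
    have h2v : ((2 : Fin n) : ℕ) = 2 := by rw [← Nat.cast_ofNat]; exact hval 2 (by omega)
    have h3v : ((3 : Fin n) : ℕ) = 3 := by rw [← Nat.cast_ofNat]; exact hval 3 (by omega)
    have hne : ∀ c : Fin n, (c : ℕ) ≠ 0 → ∀ u : Fin n, u + c ≠ u := by
      intro c hc u h
      have hc0 : c = 0 := by
        have := add_eq_left.mp h
        exact this
      rw [hc0] at hc
      simp at hc
    have cyc_adj : ∀ u : Fin n, (cycleGraph n).Adj u (u + 1) := by
      intro u
      rw [cycleGraph_adj']
      right
      rw [add_sub_cancel_left]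
      exact h1v
    have cyc_nonadj : ∀ u : Fin n, ¬ (cycleGraph n).Adj u (u + 2) := by
      intro u h
      rw [cycleGraph_adj'] at h
      rcases h with h | h
      · have h' : u - (u + 2) = 1 := Fin.ext (h.trans h1v.symm)
        have h'' : u = u + 3 :=
          (sub_eq_iff_eq_add.mp h').trans (by ring)
        exact hne 3 (by rw [h3v]; omega) u h''.symm
      · rw [add_sub_cancel_left, h2v] at h
        omega
    have hGadj : ∀ u : Fin n, G.Adj (f u) (f (u + 1)) := fun u => (hf u (u + 1)).mp (cyc_adj u)
    have hGnon : ∀ u : Fin n, ¬ G.Adj (f u) (f (u + 2)) := fun u h =>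
      cyc_nonadj u ((hf u (u + 2)).mpr h)
    let g : ℕ → G.edgeSet := fun i => ⟨s(f (i : Fin n), f ((i : Fin n) + 1)),
      G.mem_edgeSet.mpr (hGadj _)⟩
    have hcast : ∀ i : ℕ, ((i + 1 : ℕ) : Fin n) = (i : Fin n) + 1 := fun i => by push_cast; ring
    have hper : ∀ i, g (i + n) = g i := by
      intro i
      have : ((i + n : ℕ) : Fin n) = (i : Fin n) := by
        push_cast [Fin.natCast_self]
        ring
      simp only [g, this]
    have hinj : ∀ i < n, ∀ j < n, g i = g j → i = j := by
      intro i hi j hj h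
      rw [Subtype.ext_iff] at h
      rw [Sym2.eq_iff] at h
      rcases h with ⟨h1, _⟩ | ⟨h1, h2⟩
      · have := f.injective h1
        have := congrArg Fin.val this
        rw [hval i hi, hval j hj] at this
        exact this
      · have e1 : (i : Fin n) = (j : Fin n) + 1 := f.injective h1
        have e2 : (i : Fin n) + 1 = (j : Fin n) := f.injective h2
        have : (j : Fin n) + 2 = (j : Fin n) :=
          calc (j : Fin n) + 2 = ((j : Fin n) + 1) + 1 := by ring
            _ = (i : Fin n) + 1 := by rw [e1]
            _ = (j : Fin n) := e2
        exact absurd this (hne 2 (by rw [h2v]; omega) _)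
    have hadjΓ : ∀ i, G.gallai.Adj (g i) (g (i + 1)) := by
      intro i
      set u : Fin n := (i : Fin n) with hu
      have hg1 : (g (i + 1) : Sym2 V) = s(f (u + 1), f (u + 1 + 1)) := by
        simp only [g, hcast i, hu]
      unfold SimpleGraph.gallai
      refine ⟨?_, f (u + 1), f u, f (u + 1 + 1), Sym2.eq_swap, hg1, ?_⟩
      · intro h
        rw [Subtype.ext_iff, hg1] at h
        have h' : s(f u, f (u + 1)) = s(f (u + 1), f (u + 1 + 1)) := h
        rw [Sym2.eq_iff] at h'
        rcases h' with ⟨h1, _⟩ | ⟨h1, _⟩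
        · exact hne 1 (by rw [h1v]; omega) u (f.injective h1).symm
        · have h2' := f.injective h1
          have : u + 2 = u := (show u + 2 = u + 1 + 1 by ring).trans h2'.symm
          exact hne 2 (by rw [h2v]; omega) u this
      · have : u + 1 + 1 = u + 2 := by ring
        rw [this]
        exact hGnon u
    exact not_isAcyclic_of_chain G.gallai n (by omega) g hper hinj hadjΓ hac
end

section
/- Let B be a complete block of a graph G containing three distinct cut-vertices a, b, c of G, each having a neighbor outside B. Then the Gallai graph Γ(G) contains a cycle (so Γ(G) is not a forest). -/
open SimpleGraph

private lemma cycle6_aux {W : Type*} (H : SimpleGraph W) (x0 x1 x2 x3 x4 x5 : W)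
    (h01 : H.Adj x0 x1) (h12 : H.Adj x1 x2) (h23 : H.Adj x2 x3)
    (h34 : H.Adj x3 x4) (h45 : H.Adj x4 x5) (h50 : H.Adj x5 x0)
    (hnd : ([x0,x1,x2,x3,x4,x5] : List W).Nodup) : ¬ H.IsAcyclic := by
  intro hac
  apply hac (Walk.cons h01 (Walk.cons h12 (Walk.cons h23 (Walk.cons h34
    (Walk.cons h45 (Walk.cons h50 Walk.nil))))))
  simp only [List.nodup_cons, List.mem_cons, List.not_mem_nil, or_false, List.nodup_nil,
    and_true, not_or] at hnd
  constructor
  · constructor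
    · simp [Walk.isTrail_def, List.nodup_cons, Sym2.eq_iff]
      obtain ⟨⟨n01,n02,n03,n04,n05⟩,⟨n12,n13,n14,n15⟩,⟨n23,n24,n25⟩,⟨n34,n35⟩,n45⟩ := hnd
      refine ⟨?_,?_,?_,?_,?_⟩ <;> tauto
    · simp
  · simp [List.nodup_cons]
    obtain ⟨⟨n01,n02,n03,n04,n05⟩,⟨n12,n13,n14,n15⟩,⟨n23,n24,n25⟩,⟨n34,n35⟩,n45⟩ := hnd
    tauto

private lemma block_key_aux {V : Type*} (G : SimpleGraph V) (B : Set V) (hB : G.IsBlock B)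
    (hcomplete : ∀ u ∈ B, ∀ v ∈ B, u ≠ v → G.Adj u v)
    {a x w : V} (ha : a ∈ B) (hx : x ∈ B) (hax : a ≠ x)
    (hw : w ∉ B) (hwa : G.Adj a w) (hwx : G.Adj w x) : False := by
  set C : Set V := insert w B with hC
  have haC : a ∈ C := Set.mem_insert_of_mem _ ha
  have hadj : ∀ u ∈ C, ∀ h ∈ B, G.Adj w h → u ≠ h → G.Adj u h := by
    rintro u (rfl | huB) h hhB hwh hne
    · exact hwh
    · exact hcomplete u huB h hhB hne
  have hconn : (G.induce C).Connected := by
    rw [connected_iff]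
    refine ⟨fun p q => ?_, ⟨⟨a, haC⟩⟩⟩
    have hub : ∀ p : ↑C, (G.induce C).Reachable p ⟨a, haC⟩ := by
      rintro ⟨p, hp⟩
      by_cases hpa : p = a
      · subst hpa; exact Reachable.refl _
      · exact Adj.reachable (by simpa using hadj p hp a ha hwa.symm hpa)
    exact (hub p).trans (hub q).symm
  have hnocut : ∀ v, ¬ (G.induce C).IsCutVertex v := by
    rintro v ⟨p, q, hp, hq, -, hnr⟩
    apply hnr
    obtain ⟨h, hhB, hhv, hwh⟩ : ∃ h, h ∈ B ∧ h ≠ (v : V) ∧ G.Adj w h := by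
      by_cases hva : (v : V) = a
      · exact ⟨x, hx, fun e => hax (e.trans hva).symm, hwx⟩
      · exact ⟨a, ha, fun e => hva e.symm, hwa.symm⟩
    have hhC : h ∈ C := Set.mem_insert_of_mem _ hhB
    have hubne : (⟨h, hhC⟩ : ↑C) ≠ v := fun e => hhv (congrArg Subtype.val e)
    set Hub : ↑{u : ↑C | u ≠ v} := ⟨⟨h, hhC⟩, hubne⟩ with hHub
    have hub : ∀ s : ↑{u : ↑C | u ≠ v},
        ((G.induce C).induce {u : ↑C | u ≠ v}).Reachable s Hub := by
      rintro ⟨⟨s, hsC⟩, hsv⟩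
      by_cases hsh : s = h
      · subst hsh; exact Reachable.refl _
      · exact Adj.reachable (by simpa using hadj s hsC h hhB hwh hsh)
    exact (hub ⟨p, hp⟩).trans (hub ⟨q, hq⟩).symm
  have := hB.2.2 C (Set.subset_insert w B) hconn hnocut
  exact hw (this ▸ Set.mem_insert w B)

/-- If a complete block `B` of `G` contains three distinct cut-vertices each having a
neighbor outside `B`, then `Γ(G)` contains a cycle. -/
theorem stmt_16 {V : Type*} (G : SimpleGraph V) (B : Set V) (hB : G.IsBlock B)
    (hcomplete : ∀ u ∈ B, ∀ v ∈ B, u ≠ v → G.Adj u v)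
    (a b c : V) (ha : a ∈ B) (hb : b ∈ B) (hc : c ∈ B)
    (hab : a ≠ b) (hac : a ≠ c) (hbc : b ≠ c)
    (hca : G.IsCutVertex a) (hcb : G.IsCutVertex b) (hcc : G.IsCutVertex c)
    (ha' : ∃ a' ∉ B, G.Adj a a') (hb' : ∃ b' ∉ B, G.Adj b b')
    (hc' : ∃ c' ∉ B, G.Adj c c') :
    ¬ G.gallai.IsAcyclic := by
  obtain ⟨a', ha'B, haa'⟩ := ha'
  obtain ⟨b', hb'B, hbb'⟩ := hb'
  obtain ⟨c', hc'B, hcc'⟩ := hc'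
  have na'b : ¬ G.Adj a' b := fun h => block_key_aux G B hB hcomplete ha hb hab ha'B haa' h
  have na'c : ¬ G.Adj a' c := fun h => block_key_aux G B hB hcomplete ha hc hac ha'B haa' h
  have nb'a : ¬ G.Adj b' a := fun h => block_key_aux G B hB hcomplete hb ha hab.symm hb'B hbb' h
  have nb'c : ¬ G.Adj b' c := fun h => block_key_aux G B hB hcomplete hb hc hbc hb'B hbb' h
  have nc'a : ¬ G.Adj c' a := fun h => block_key_aux G B hB hcomplete hc ha hac.symm hc'B hcc' h
  have nc'b : ¬ G.Adj c' b := fun h => block_key_aux G B hB hcomplete hc hb hbc.symm hc'B hcc' h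
  have hAB : G.Adj a b := hcomplete a ha b hb hab
  have hBC : G.Adj b c := hcomplete b hb c hc hbc
  have hCA : G.Adj c a := hcomplete c hc a ha hac.symm
  have ne_of_mem : ∀ {u w : V}, u ∈ B → w ∉ B → u ≠ w := by
    rintro u w hu hw rfl; exact hw hu
  have e0 : G.edgeSet := ⟨s(a, a'), G.mem_edgeSet.mpr haa'⟩
  refine cycle6_aux G.gallai
    ⟨s(a, a'), G.mem_edgeSet.mpr haa'⟩ ⟨s(a, b), G.mem_edgeSet.mpr hAB⟩
    ⟨s(b, b'), G.mem_edgeSet.mpr hbb'⟩ ⟨s(b, c), G.mem_edgeSet.mpr hBC⟩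
    ⟨s(c, c'), G.mem_edgeSet.mpr hcc'⟩ ⟨s(c, a), G.mem_edgeSet.mpr hCA⟩
    ?_ ?_ ?_ ?_ ?_ ?_ ?_
  · exact ⟨by simp [Subtype.ext_iff, Sym2.eq_iff]; tauto, a, a', b, rfl, rfl, na'b⟩
  · exact ⟨by simp [Subtype.ext_iff, Sym2.eq_iff]; exact ⟨fun _ => ne_of_mem hb hb'B, ne_of_mem ha hb'B⟩,
      b, a, b', Sym2.eq_swap, rfl, fun h => nb'a h.symm⟩
  · exact ⟨by simp [Subtype.ext_iff, Sym2.eq_iff]; tauto, b, b', c, rfl, rfl, nb'c⟩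
  · exact ⟨by simp [Subtype.ext_iff, Sym2.eq_iff]; exact ⟨fun _ => ne_of_mem hc hc'B, ne_of_mem hb hc'B⟩,
      c, b, c', Sym2.eq_swap, rfl, fun h => nc'b h.symm⟩
  · exact ⟨by simp [Subtype.ext_iff, Sym2.eq_iff]; tauto, c, c', a, rfl, rfl, nc'a⟩
  · exact ⟨by simp [Subtype.ext_iff, Sym2.eq_iff]; tauto, a, c, a', Sym2.eq_swap, rfl,
      fun h => na'c h.symm⟩
  · have h1 : a ≠ b' := ne_of_mem ha hb'B
    have h2 : a ≠ c' := ne_of_mem ha hc'B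
    have h3 : b ≠ a' := ne_of_mem hb ha'B
    have h4 : b ≠ c' := ne_of_mem hb hc'B
    have h5 : c ≠ a' := ne_of_mem hc ha'B
    have h6 : c ≠ b' := ne_of_mem hc hb'B
    have h7 : a' ≠ a := haa'.ne'
    have h8 : b' ≠ b := hbb'.ne'
    have h9 : c' ≠ c := hcc'.ne'
    simp [List.nodup_cons, Subtype.ext_iff, Sym2.eq_iff]
    refine ⟨?_,?_,?_,?_,?_⟩ <;> tauto
end
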